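/- arXiv:1903.05186 — 5 statements merged into one kernel-verified Lean document; each statement's English description precedes it below -/
import Mathlib

section
/- The AGM conjunction function is monotone: for all x, y, u, v ∈ [−1, 1] with x ≤ u and y ≤ v, it holds that △(x, y) ≤ △(u, v). -/
/-- AGM conjunction function. -/
noncomputable def agmAnd (x y : ℝ) : ℝ :=
  if 0 < x ∧ 0 < y then Real.sqrt ((1 + x) * (1 + y)) - 1
  else (min x 0 + min y 0) / 2

/-- The AGM conjunction function is monotone on [-1,1]². -/
theorem agmAnd_mono :
    ∀ x y u v : ℝ, x ∈ Set.Icc (-1 : ℝ) 1 → y ∈ Set.Icc (-1 : ℝ) 1 →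
      u ∈ Set.Icc (-1 : ℝ) 1 → v ∈ Set.Icc (-1 : ℝ) 1 →
      x ≤ u → y ≤ v → agmAnd x y ≤ agmAnd u v := by
  intro x y u v hx hy hu hv hxu hyv
  obtain ⟨hx1, hx2⟩ := hx
  obtain ⟨hy1, hy2⟩ := hy
  unfold agmAnd
  by_cases hxy : 0 < x ∧ 0 < y
  · have huv : 0 < u ∧ 0 < v := ⟨lt_of_lt_of_le hxy.1 hxu, lt_of_lt_of_le hxy.2 hyv⟩
    rw [if_pos hxy, if_pos huv]
    have : Real.sqrt ((1 + x) * (1 + y)) ≤ Real.sqrt ((1 + u) * (1 + v)) := by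
      apply Real.sqrt_le_sqrt
      apply mul_le_mul (by linarith) (by linarith) (by linarith) (by linarith)
    linarith
  · rw [if_neg hxy]
    have hle : (min x 0 + min y 0) / 2 ≤ 0 := by
      have := min_le_right x 0
      have := min_le_right y 0
      linarith
    by_cases huv : 0 < u ∧ 0 < v
    · rw [if_pos huv]
      have h1 : (1:ℝ) ≤ (1 + u) * (1 + v) := by nlinarith [huv.1, huv.2]
      nlinarith [Real.sqrt_nonneg ((1+u)*(1+v)), Real.one_le_sqrt.mpr h1]
    · rw [if_neg huv]
      have h1 : min x 0 ≤ min u 0 := min_le_min hxu le_rfl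
      have h2 : min y 0 ≤ min v 0 := min_le_min hyv le_rfl
      linarith
end

section
/- DeMorgan's law for AGM robustness: for all x, y ∈ [−1, 1] with x ≠ 0 and y ≠ 0, it holds that ▽(x, y) = −△(−x, −y). -/
/-- AGM disjunction function. -/
noncomputable def agmOr (x y : ℝ) : ℝ :=
  if 0 < x ∨ 0 < y then (max x 0 + max y 0) / 2
  else 1 - Real.sqrt ((1 - x) * (1 - y))

/-- AGM negation. -/
def agmNeg (x : ℝ) : ℝ := -x

/-- DeMorgan's law for AGM robustness. -/
theorem agm_deMorgan :
    ∀ x y : ℝ, x ∈ Set.Icc (-1 : ℝ) 1 → y ∈ Set.Icc (-1 : ℝ) 1 → x ≠ 0 → y ≠ 0 →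
      agmOr x y = agmNeg (agmAnd (agmNeg x) (agmNeg y)) := by
  intro x y hx hy hx0 hy0
  unfold agmOr agmAnd agmNeg
  by_cases h : 0 < x ∨ 0 < y
  · have h' : ¬ (0 < -x ∧ 0 < -y) := by
      rintro ⟨h1, h2⟩
      rcases h with h | h <;> linarith
    rw [if_pos h, if_neg h']
    have e1 : min (-x) 0 = -max x 0 := by rw [← neg_zero, min_neg_neg, neg_zero]
    have e2 : min (-y) 0 = -max y 0 := by rw [← neg_zero, min_neg_neg, neg_zero]
    rw [e1, e2]; ring
  · have h' : 0 < -x ∧ 0 < -y := by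
      push_neg at h
      exact ⟨neg_pos.mpr (lt_of_le_of_ne h.1 hx0), neg_pos.mpr (lt_of_le_of_ne h.2 hy0)⟩
    rw [if_neg h, if_pos h']
    ring_nf
end

section
/- Kleene algebra condition for AGM robustness: for all x, y ∈ [−1, 1], △(x, −x) ≤ ▽(y, −y). -/
/-- Kleene algebra condition for AGM robustness. -/
theorem agm_kleene :
    ∀ x y : ℝ, x ∈ Set.Icc (-1 : ℝ) 1 → y ∈ Set.Icc (-1 : ℝ) 1 →
      agmAnd x (agmNeg x) ≤ agmOr y (agmNeg y) := by
  intro x y _ _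
  have h1 : agmAnd x (agmNeg x) ≤ 0 := by
    unfold agmAnd agmNeg
    have : ¬ (0 < x ∧ 0 < -x) := by
      rintro ⟨h1, h2⟩; linarith
    rw [if_neg this]
    have := min_le_right x 0
    have := min_le_right (-x) 0
    linarith
  have h2 : (0:ℝ) ≤ agmOr y (agmNeg y) := by
    unfold agmOr agmNeg
    by_cases h : 0 < y ∨ 0 < -y
    · rw [if_pos h]
      have := le_max_right y 0
      have := le_max_right (-y) 0
      linarith
    · rw [if_neg h]
      push_neg at h
      have hy : y = 0 := by linarith [h.1, h.2]
      simp [hy]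
  linarith
end

section
/- Soundness of the m-ary AGM conjunction (covering both the conjunction and the globally operator): let s be a nonempty finite set of indices with cardinality N and f a real-valued function on s with f(i) ∈ [−1, 1] for all i ∈ s. Define A(f) = (∏_{i∈s} (1 + f(i)))^{1/N} − 1 if f(i) > 0 for all i ∈ s, and A(f) = (1/N) ∑_{i∈s} min(f(i), 0) otherwise. Then A(f) > 0 if and only if f(i) > 0 for all i ∈ s, and A(f) < 0 if and only if there exists i ∈ s with f(i) < 0. -/
open Finset in
/-- m-ary AGM conjunction value over a finite index set. -/
noncomputable def agmConjFin {ι : Type*} (s : Finset ι) (f : ι → ℝ) : ℝ :=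
  if ∀ i ∈ s, 0 < f i then
    (∏ i ∈ s, (1 + f i)) ^ ((s.card : ℝ)⁻¹) - 1
  else
    (∑ i ∈ s, min (f i) 0) / s.card

/-- Soundness of the m-ary AGM conjunction. -/
theorem agmConjFin_sound {ι : Type*} (s : Finset ι) (hs : s.Nonempty) (f : ι → ℝ)
    (hf : ∀ i ∈ s, f i ∈ Set.Icc (-1 : ℝ) 1) :
    (0 < agmConjFin s f ↔ ∀ i ∈ s, 0 < f i) ∧
    (agmConjFin s f < 0 ↔ ∃ i ∈ s, f i < 0) := by
  have hcard : (0 : ℝ) < s.card := by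
    exact_mod_cast Finset.card_pos.mpr hs
  unfold agmConjFin
  by_cases h : ∀ i ∈ s, 0 < f i
  · rw [if_pos h]
    have hprod : (1 : ℝ) < ∏ i ∈ s, (1 + f i) := by
      calc (1:ℝ) = ∏ i ∈ s, 1 := by simp
      _ < ∏ i ∈ s, (1 + f i) := by
          apply Finset.prod_lt_prod_of_nonempty (by simp) _ hs
          intro i hi; linarith [h i hi]
    have hpos : (0:ℝ) < (∏ i ∈ s, (1 + f i)) ^ ((s.card : ℝ)⁻¹) - 1 := by
      have := Real.one_lt_rpow_iff_of_pos (x := ∏ i ∈ s, (1 + f i))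
        (y := (s.card : ℝ)⁻¹) (by linarith)
      have h1 : (1:ℝ) < (∏ i ∈ s, (1 + f i)) ^ ((s.card : ℝ)⁻¹) := by
        rw [this]; exact Or.inl ⟨hprod, by positivity⟩
      linarith
    constructor
    · exact ⟨fun _ => h, fun _ => hpos⟩
    · constructor
      · intro hneg; linarith
      · rintro ⟨i, hi, hfi⟩; exact absurd (h i hi) (by linarith)
  · rw [if_neg h]
    push_neg at h
    obtain ⟨j, hj, hfj⟩ := h
    have hsum_le : (∑ i ∈ s, min (f i) 0) ≤ 0 :=
      Finset.sum_nonpos fun i _ => min_le_right _ _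
    have hA : (∑ i ∈ s, min (f i) 0) / s.card ≤ 0 :=
      div_nonpos_of_nonpos_of_nonneg hsum_le hcard.le
    constructor
    · constructor
      · intro hpos; linarith
      · intro hall; exact absurd (hall j hj) (by linarith)
    · constructor
      · intro hneg
        have hsum : (∑ i ∈ s, min (f i) 0) < 0 := by
          by_contra hge; push_neg at hge
          have : (0:ℝ) ≤ (∑ i ∈ s, min (f i) 0) / s.card := div_nonneg hge hcard.le
          linarith
        obtain ⟨i, hi, hmin⟩ : ∃ i ∈ s, min (f i) 0 < 0 := by
          by_contra hc; push_neg at hc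
          have : (0:ℝ) ≤ ∑ i ∈ s, min (f i) 0 :=
            Finset.sum_nonneg fun i hi => hc i hi
          linarith
        exact ⟨i, hi, (min_lt_iff.mp hmin).resolve_right (lt_irrefl 0)⟩
      · rintro ⟨i, hi, hfi⟩
        have hsum : (∑ i ∈ s, min (f i) 0) < 0 := by
          have : ∑ i ∈ s, min (f i) 0 < ∑ i ∈ s, (0:ℝ) :=
            Finset.sum_lt_sum (fun j _ => min_le_right _ _)
              ⟨i, hi, min_lt_iff.mpr (Or.inl hfi)⟩
          simpa using this
        exact div_neg_of_neg_of_pos hsum hcard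
end

section
/- Soundness of the m-ary AGM disjunction (covering both the disjunction and the eventually operator): let s be a nonempty finite set of indices with cardinality N and f a real-valued function on s with f(i) ∈ [−1, 1] for all i ∈ s. Define D(f) = (1/N) ∑_{i∈s} max(f(i), 0) if there exists i ∈ s with f(i) > 0, and D(f) = 1 − (∏_{i∈s} (1 − f(i)))^{1/N} otherwise. Then D(f) > 0 if and only if there exists i ∈ s with f(i) > 0, and D(f) < 0 if and only if f(i) ≤ 0 for all i ∈ s and there exists i ∈ s with f(i) < 0. -/
open Finset in
/-- m-ary AGM disjunction value over a finite index set. -/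
noncomputable def agmDisjFin {ι : Type*} (s : Finset ι) (f : ι → ℝ) : ℝ :=
  if ∃ i ∈ s, 0 < f i then
    (∑ i ∈ s, max (f i) 0) / s.card
  else
    1 - (∏ i ∈ s, (1 - f i)) ^ ((s.card : ℝ)⁻¹)

/-- Soundness of the m-ary AGM disjunction. -/
theorem agmDisjFin_sound {ι : Type*} (s : Finset ι) (hs : s.Nonempty) (f : ι → ℝ)
    (hf : ∀ i ∈ s, f i ∈ Set.Icc (-1 : ℝ) 1) :
    (0 < agmDisjFin s f ↔ ∃ i ∈ s, 0 < f i) ∧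
    (agmDisjFin s f < 0 ↔ (∀ i ∈ s, f i ≤ 0) ∧ ∃ i ∈ s, f i < 0) := by
  by_cases h : ∃ i ∈ s, 0 < f i
  · obtain ⟨j, hj, hjpos⟩ := h
    have hD : 0 < agmDisjFin s f := by
      rw [agmDisjFin, if_pos ⟨j, hj, hjpos⟩]
      apply div_pos
      · calc (0:ℝ) < max (f j) 0 := lt_max_iff.mpr (Or.inl hjpos)
          _ ≤ ∑ i ∈ s, max (f i) 0 :=
            Finset.single_le_sum (f := fun i => max (f i) 0) (fun i _ => le_max_right _ _) hj
      · exact_mod_cast hs.card_pos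
    refine ⟨⟨fun _ => ⟨j, hj, hjpos⟩, fun _ => hD⟩, ?_, ?_⟩
    · intro hlt; linarith
    · rintro ⟨hall, _⟩; linarith [hall j hj]
  · push_neg at h
    have hN : (0:ℝ) < (s.card:ℝ)⁻¹ := inv_pos.mpr (by exact_mod_cast hs.card_pos)
    have hfac : ∀ i ∈ s, (1:ℝ) ≤ 1 - f i := fun i hi => by linarith [h i hi]
    have hprod1 : (1:ℝ) ≤ ∏ i ∈ s, (1 - f i) := by
      calc (1:ℝ) = ∏ i ∈ s, 1 := (Finset.prod_const_one).symm
        _ ≤ ∏ i ∈ s, (1 - f i) := Finset.prod_le_prod (fun i _ => zero_le_one) hfac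
    rw [agmDisjFin, if_neg (by push_neg; exact h)]
    have hrpow1 : (1:ℝ) ≤ (∏ i ∈ s, (1 - f i)) ^ ((s.card:ℝ)⁻¹) :=
      Real.one_le_rpow hprod1 hN.le
    refine ⟨⟨fun hpos => absurd hpos (by linarith), ?_⟩, ?_, ?_⟩
    · rintro ⟨i, hi, hpos⟩; exact absurd hpos (not_lt.mpr (h i hi))
    · intro hlt
      refine ⟨h, ?_⟩
      by_contra hc; push_neg at hc
      have heq : ∏ i ∈ s, (1 - f i) = 1 :=
        Finset.prod_eq_one (fun i hi => by have := le_antisymm (h i hi) (hc i hi); rw [this]; ring)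
      rw [heq, Real.one_rpow] at hlt; linarith
    · rintro ⟨_, i, hi, hneg⟩
      classical
      have hlt1 : (1:ℝ) < ∏ j ∈ s, (1 - f j) := by
        rw [← Finset.prod_erase_mul s _ hi]
        have h1 : (1:ℝ) ≤ ∏ j ∈ s.erase i, (1 - f j) := by
          calc (1:ℝ) = ∏ j ∈ s.erase i, 1 := (Finset.prod_const_one).symm
            _ ≤ _ := Finset.prod_le_prod (fun j _ => zero_le_one)
                (fun j hj => hfac j (Finset.mem_of_mem_erase hj))
        nlinarith [hfac i hi]
      have : 1 < (∏ j ∈ s, (1 - f j)) ^ ((s.card:ℝ)⁻¹) :=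
        (Real.one_lt_rpow_iff_of_pos (by linarith)).mpr (Or.inl ⟨hlt1, hN⟩)
      linarith
end
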